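/- If μ is an expansive measure of a continuous flow φ on a compact metric space X, then μ(Per_T(φ)) = 0 for every T ≥ 0, where Per_T(φ) denotes the set of points which are singularities or periodic with minimal period at most T. -/

import Mathlib

open MeasureTheory

/-- The dynamical ball `Γ_δ(x)` of a flow. -/
def Gamma {X : Type*} [MetricSpace X] (φ : ℝ → X → X) (δ : ℝ) (x : X) : Set X :=
  {y | ∃ h : ℝ → ℝ, Continuous h ∧ h 0 = 0 ∧ ∀ t : ℝ, dist (φ t x) (φ (h t) y) ≤ δ}

/-- `p` is the minimal period of `y` for the flow `φ`: either `p > 0` is the least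
positive number with `φ_p(y) = y`, or `p = 0` and `y` is a singularity. -/
def IsMinPeriod {X : Type*} (φ : ℝ → X → X) (y : X) (p : ℝ) : Prop :=
  (0 < p ∧ φ p y = y ∧ ∀ s : ℝ, 0 < s → φ s y = y → p ≤ s) ∨
    (p = 0 ∧ ∀ t : ℝ, φ t y = y)

section Aux
variable {X : Type*} [MetricSpace X] (φ : ℝ → X → X)

lemma flow_shift (hadd : ∀ s t x, φ t (φ s x) = φ (t + s) x)
    {x : X} {p : ℝ} (hper : φ p x = x) (u : ℝ) : φ (u + p) x = φ u x := by
  rw [← hadd p u x, hper]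

lemma flow_per_int (hadd : ∀ s t x, φ t (φ s x) = φ (t + s) x)
    {x : X} {p : ℝ} (hper : φ p x = x) (n : ℤ) (u : ℝ) : φ (u + n * p) x = φ u x := by
  induction n using Int.induction_on with
  | zero => simp
  | succ k ih =>
      push_cast at ih ⊢
      have h : u + ((k : ℝ) + 1) * p = (u + (k : ℝ) * p) + p := by ring
      rw [h, flow_shift φ hadd hper, ih]
  | pred k ih =>
      push_cast at ih ⊢
      have h2 := flow_shift φ hadd hper (u + (-(k : ℝ) - 1) * p)
      have h3 : (u + (-(k : ℝ) - 1) * p) + p = u + (-(k : ℝ)) * p := by ring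
      rw [h3] at h2
      rw [← ih, ← h2]

lemma flow_mod (hadd : ∀ s t x, φ t (φ s x) = φ (t + s) x)
    {x : X} {p : ℝ} (hp : 0 < p) (hper : φ p x = x) (t : ℝ) :
    ∃ s, 0 ≤ s ∧ s < p ∧ φ t x = φ s x ∧ ∃ n : ℤ, t = s + n * p := by
  refine ⟨t - ⌊t / p⌋ * p, ?_, ?_, ?_, ⌊t / p⌋, by ring⟩
  · have h1 : (⌊t / p⌋ : ℝ) ≤ t / p := Int.floor_le _
    nlinarith [(le_div_iff₀ hp).mp h1]
  · have h2 : t / p < ⌊t / p⌋ + 1 := Int.lt_floor_add_one _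
    nlinarith [(div_lt_iff₀ hp).mp h2]
  · have := flow_per_int φ hadd hper ⌊t / p⌋ (t - ⌊t / p⌋ * p)
    rw [← this]; ring_nf

lemma flow_min_mult (hadd : ∀ s t x, φ t (φ s x) = φ (t + s) x)
    {x : X} {p : ℝ} (hp : 0 < p) (hper : φ p x = x)
    (hmin : ∀ s : ℝ, 0 < s → φ s x = x → p ≤ s)
    {s : ℝ} (hs0 : 0 ≤ s) (hs : φ s x = x) : ∃ k : ℕ, s = k * p := by
  obtain ⟨r, hr0, hrp, hre, n, hn⟩ := flow_mod φ hadd hp hper s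
  have hrx : φ r x = x := by rw [← hre, hs]
  have hr : r = 0 := by
    by_contra h
    have : 0 < r := lt_of_le_of_ne hr0 (Ne.symm h)
    exact absurd (hmin r this hrx) (not_le.mpr hrp)
  subst hr
  have hn0 : (0 : ℤ) ≤ n := by
    by_contra h
    push_neg at h
    have : (n : ℝ) ≤ -1 := by exact_mod_cast Int.le_sub_one_iff.mpr h
    nlinarith
  refine ⟨n.toNat, ?_⟩
  rw [hn]
  have hc : ((n.toNat : ℕ) : ℝ) = (n : ℝ) := by exact_mod_cast Int.toNat_of_nonneg hn0
  rw [hc]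
  ring

lemma flow_unif [CompactSpace X]
    (hcont : Continuous fun q : ℝ × X => φ q.1 q.2)
    (R δ' : ℝ) (hR : 0 < R) (hδ : 0 < δ') :
    ∃ ε > 0, ∀ s s' : ℝ, |s| ≤ R → |s'| ≤ R → |s - s'| < ε →
      ∀ y z : X, dist y z < ε → dist (φ s y) (φ s' z) < δ' := by
  have hK : IsCompact ((Set.Icc (-R) R) ×ˢ (Set.univ : Set X)) :=
    isCompact_Icc.prod isCompact_univ
  have hUC : UniformContinuousOn (fun q : ℝ × X => φ q.1 q.2)
      ((Set.Icc (-R) R) ×ˢ (Set.univ : Set X)) :=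
    hK.uniformContinuousOn_of_continuous hcont.continuousOn
  rw [Metric.uniformContinuousOn_iff] at hUC
  obtain ⟨ε, hε, h⟩ := hUC δ' hδ
  refine ⟨ε, hε, fun s s' hs hs' hss y z hyz => ?_⟩
  have h1 : ((s, y) : ℝ × X) ∈ (Set.Icc (-R) R) ×ˢ (Set.univ : Set X) := by
    simp [abs_le.mp hs]
  have h2 : ((s', z) : ℝ × X) ∈ (Set.Icc (-R) R) ×ˢ (Set.univ : Set X) := by
    simp [abs_le.mp hs']
  have hd : dist ((s, y) : ℝ × X) (s', z) < ε := by
    rw [Prod.dist_eq]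
    simp only [Real.dist_eq, max_lt_iff]
    exact ⟨hss, hyz⟩
  exact h _ h1 _ h2 hd

end Aux

section Aux2
variable {X : Type*} [MetricSpace X] [CompactSpace X] (φ : ℝ → X → X)

lemma flow_per_nat (hadd : ∀ s t x, φ t (φ s x) = φ (t + s) x) (hzero : ∀ x, φ 0 x = x)
    {x : X} {p : ℝ} (hper : φ p x = x) (k : ℕ) : φ ((k : ℝ) * p) x = x := by
  have := flow_per_int φ hadd hper (k : ℤ) 0
  push_cast at this
  rw [zero_add] at this
  rw [this, hzero]

lemma flow_gap
    (hcont : Continuous fun q : ℝ × X => φ q.1 q.2)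
    (hadd : ∀ s t x, φ t (φ s x) = φ (t + s) x)
    {x : X} {p : ℝ} (hp : 0 < p) (hper : φ p x = x)
    (hmin : ∀ s : ℝ, 0 < s → φ s x = x → p ≤ s)
    (T η : ℝ) (hη : 0 < η) :
    ∃ γ > 0, ∀ q, 0 ≤ q → q ≤ T → dist (φ q x) x < γ → ∃ k : ℕ, |q - k * p| < η := by
  set M : ℕ := ⌈T / p⌉₊ with hM
  set C : Set ℝ := ⋂ k ∈ Finset.range (M + 1), {s : ℝ | η ≤ |s - (k : ℝ) * p|} with hC
  have hCc : IsClosed C := by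
    refine isClosed_biInter fun k _ => ?_
    exact isClosed_le continuous_const ((continuous_id.sub continuous_const).abs)
  set K : Set ℝ := Set.Icc 0 T ∩ C with hK
  have hKc : IsCompact K := isCompact_Icc.inter_right hCc
  have hf : Continuous fun s : ℝ => dist (φ s x) x :=
    (hcont.comp (continuous_id.prodMk continuous_const)).dist continuous_const
  have hpos : ∀ s ∈ K, 0 < dist (φ s x) x := by
    rintro s ⟨⟨hs0, hsT⟩, hsC⟩
    rcases eq_or_lt_of_le (dist_nonneg : (0:ℝ) ≤ dist (φ s x) x) with h | h
    · exfalso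
      have hsx : φ s x = x := by rwa [eq_comm, dist_eq_zero] at h
      obtain ⟨k, hk⟩ := flow_min_mult φ hadd hp hper hmin hs0 hsx
      have hkM : k ∈ Finset.range (M + 1) := by
        rw [Finset.mem_range, Nat.lt_succ_iff]
        have h1 : (k : ℝ) ≤ T / p := by
          rw [le_div_iff₀ hp]; rw [← hk]; exact hsT
        calc k = ⌈(k : ℝ)⌉₊ := (Nat.ceil_natCast k).symm
          _ ≤ M := Nat.ceil_le_ceil h1
      have := Set.mem_iInter₂.mp hsC k hkM
      simp only [Set.mem_setOf_eq, hk, sub_self, abs_zero] at this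
      linarith
    · exact h
  -- get a positive lower bound γ on K
  have hγ : ∃ γ > 0, ∀ s ∈ K, γ ≤ dist (φ s x) x := by
    rcases K.eq_empty_or_nonempty with he | hne
    · exact ⟨1, one_pos, fun s hs => by simp [he] at hs⟩
    · obtain ⟨z, hz, hzmin⟩ := hKc.exists_isMinOn hne hf.continuousOn
      exact ⟨dist (φ z x) x, hpos z hz, fun s hs => hzmin hs⟩
  obtain ⟨γ, hγ0, hγle⟩ := hγ
  refine ⟨γ, hγ0, fun q hq0 hqT hq => ?_⟩
  have hqK : q ∉ K := fun hmem => absurd (hγle q hmem) (not_le.mpr hq)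
  have hqC : q ∉ C := fun hc => hqK ⟨⟨hq0, hqT⟩, hc⟩
  rw [hC, Set.mem_iInter₂] at hqC
  push_neg at hqC
  obtain ⟨k, _, hk⟩ := hqC
  exact ⟨k, not_le.mp hk⟩

end Aux2

section Aux3
variable {X : Type*} [MetricSpace X] [CompactSpace X] (φ : ℝ → X → X)

lemma local_gamma
    (hcont : Continuous fun q : ℝ × X => φ q.1 q.2)
    (hzero : ∀ x, φ 0 x = x)
    (hadd : ∀ s t x, φ t (φ s x) = φ (t + s) x)
    {δ T : ℝ} (hδ : 0 < δ) (hT : 0 ≤ T)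
    {x : X} {p : ℝ} (hpT : p ≤ T) (hmp : IsMinPeriod φ x p) :
    ∃ ε > 0, ∀ y q, 0 ≤ q → q ≤ T → IsMinPeriod φ y q → dist x y < ε →
      y ∈ Gamma φ δ x := by
  rcases hmp with ⟨hp, hper, hmin⟩ | ⟨hp0, hsing⟩
  swap
  · -- x is a singularity
    refine ⟨δ, hδ, fun y q _ _ _ hxy => ?_⟩
    exact ⟨fun _ => 0, continuous_const, rfl, fun t => by
      rw [hsing t, hzero]; exact le_of_lt hxy⟩
  -- x is periodic with minimal period p > 0
  set R : ℝ := T + p + 1 with hR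
  have hR0 : 0 < R := by positivity
  obtain ⟨ε₀, hε₀, hu₀⟩ := flow_unif φ hcont R (δ/4) hR0 (by positivity)
  set η : ℝ := min ε₀ 1 with hη
  have hη0 : 0 < η := lt_min hε₀ one_pos
  obtain ⟨γ, hγ0, hgap⟩ := flow_gap φ hcont hadd hp hper hmin T η hη0
  obtain ⟨ε₄, hε₄, hu₄⟩ := flow_unif φ hcont R (γ/2) hR0 (by positivity)
  refine ⟨min (min ε₀ ε₄) (min (γ/2) δ), by positivity, fun y q hq0 hqT hmq hxy => ?_⟩
  have hxy0 : dist x y < ε₀ := lt_of_lt_of_le hxy (le_trans (min_le_left _ _) (min_le_left _ _))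
  have hxy4 : dist x y < ε₄ := lt_of_lt_of_le hxy (le_trans (min_le_left _ _) (min_le_right _ _))
  have hxyγ : dist x y < γ/2 := lt_of_lt_of_le hxy (le_trans (min_le_right _ _) (min_le_left _ _))
  -- helper: uniform estimate with equal times in [0, T+1]
  have hsame : ∀ s : ℝ, 0 ≤ s → s ≤ T + p + 1 → dist (φ s x) (φ s y) < δ/4 := by
    intro s h0 h1
    refine hu₀ s s ?_ ?_ (by simpa using hε₀) x y hxy0
    · rw [abs_of_nonneg h0]; linarith
    · rw [abs_of_nonneg h0]; linarith
  rcases hmq with ⟨hq, hqper, hqmin⟩ | ⟨hq00, hqsing⟩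
  swap
  · -- y is a singularity : use h = id
    refine ⟨id, continuous_id, rfl, fun t => ?_⟩
    simp only [id_eq]
    obtain ⟨s, hs0, hsp, hse, _⟩ := flow_mod φ hadd hp hper t
    rw [hse, hqsing t, ← hqsing s]
    exact le_of_lt (lt_of_lt_of_le (hsame s hs0 (by linarith)) (by linarith))
  -- y is periodic with minimal period q > 0
  have hqx : dist (φ q x) x < γ := by
    have h1 : dist (φ q x) (φ q y) < γ/2 := by
      refine hu₄ q q ?_ ?_ (by simpa using hε₄) x y hxy4 <;>
        · rw [abs_of_nonneg hq0]; linarith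
    calc dist (φ q x) x ≤ dist (φ q x) (φ q y) + dist (φ q y) x := dist_triangle _ _ _
      _ = dist (φ q x) (φ q y) + dist x y := by rw [hqper, dist_comm y x]
      _ < γ/2 + γ/2 := by linarith
      _ = γ := by ring
  obtain ⟨k, hk⟩ := hgap q hq0 hqT hqx
  rcases Nat.eq_zero_or_pos k with hk0 | hkpos
  · -- k = 0 : q < η is tiny, use h = id
    subst hk0
    simp only [Nat.cast_zero, zero_mul, sub_zero] at hk
    rw [abs_of_nonneg hq0] at hk
    refine ⟨id, continuous_id, rfl, fun t => ?_⟩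
    obtain ⟨s, hs0, hsp, hse, _⟩ := flow_mod φ hadd hp hper t
    obtain ⟨u, hu0, huq, hue, _⟩ := flow_mod φ hadd hq hqper t
    obtain ⟨v, hv0, hvq, hve, _⟩ := flow_mod φ hadd hq hqper s
    have hsmall : ∀ w, 0 ≤ w → w < q → dist (φ w y) y < δ/4 := by
      intro w h0 h1
      have := hu₀ w 0 (by rw [abs_of_nonneg h0]; linarith)
        (by simp; linarith) (by rw [sub_zero, abs_of_nonneg h0]
                                exact lt_of_lt_of_le (lt_of_lt_of_le h1 hk.le) (min_le_left _ _))
        y y (by simpa using hε₀)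
      rwa [hzero] at this
    simp only [id]
    rw [hse, hue]
    calc dist (φ s x) (φ u y)
        ≤ dist (φ s x) (φ s y) + dist (φ s y) (φ u y) := dist_triangle _ _ _
      _ = dist (φ s x) (φ s y) + dist (φ v y) (φ u y) := by rw [hve]
      _ ≤ dist (φ s x) (φ s y) + (dist (φ v y) y + dist y (φ u y)) := by
            have := dist_triangle (φ v y) y (φ u y); linarith
      _ ≤ δ/4 + (δ/4 + δ/4) := by
            have h1 := hsame s hs0 (by linarith)
            have h2 := hsmall v hv0 hvq
            have h3 := hsmall u hu0 huq
            rw [dist_comm y (φ u y)]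
            linarith
      _ ≤ δ := by linarith
  · -- k ≥ 1 : linear reparametrization
    set P : ℝ := (k : ℝ) * p with hPdef
    have hP : 0 < P := mul_pos (by exact_mod_cast hkpos) hp
    have hPper : φ P x = x := flow_per_nat φ hadd hzero hper k
    have hPq : |q - P| < η := hk
    have hPle : P ≤ T + 1 := by
      have h1 : P - q ≤ |q - P| := by rw [abs_sub_comm]; exact le_abs_self _
      have h2 : η ≤ 1 := min_le_right _ _
      linarith
    refine ⟨fun t => (q / P) * t, continuous_const.mul continuous_id, mul_zero _, fun t => ?_⟩
    obtain ⟨s, hs0, hsP, hse, n, hn⟩ := flow_mod φ hadd hP hPper t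
    have harg : (q / P) * t = ((q / P) * s) + (n : ℝ) * q := by
      rw [hn]; field_simp
    set s' : ℝ := (q / P) * s with hs'
    have hys' : φ ((q / P) * t) y = φ s' y := by
      rw [harg, flow_per_int φ hadd hqper n s']
    have hs'0 : 0 ≤ s' := mul_nonneg (div_nonneg hq0 hP.le) hs0
    have hs'q : s' ≤ q := by
      rw [hs']
      calc (q / P) * s ≤ (q / P) * P := by
            apply mul_le_mul_of_nonneg_left hsP.le (div_nonneg hq0 hP.le)
        _ = q := by field_simp
    have hss' : |s - s'| < η := by
      have heq : s - s' = (s / P) * (P - q) := by rw [hs']; field_simp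
      have h1 : |s - s'| ≤ |P - q| := by
        rw [heq, abs_mul, abs_of_nonneg (div_nonneg hs0 hP.le)]
        exact mul_le_of_le_one_left (abs_nonneg _) ((div_le_one hP).mpr hsP.le)
      rw [abs_sub_comm] at hPq
      linarith
    rw [hse, hys']
    have h1 : dist (φ s x) (φ s y) < δ/4 := hsame s hs0 (by linarith)
    have h2 : dist (φ s y) (φ s' y) < δ/4 := by
      refine hu₀ s s' ?_ ?_ (lt_of_lt_of_le hss' (min_le_left _ _)) y y (by simpa using hε₀)
      · rw [abs_of_nonneg hs0]; linarith
      · rw [abs_of_nonneg hs'0]; linarith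
    calc dist (φ s x) (φ s' y) ≤ dist (φ s x) (φ s y) + dist (φ s y) (φ s' y) :=
          dist_triangle _ _ _
      _ ≤ δ := by linarith
end Aux3

/-- An expansive measure of a continuous flow on a compact metric space gives zero
measure to the set `Per_T(φ)` of points of minimal period at most `T`, for all `T ≥ 0`. -/
theorem expansive_measure_PerT_null
    {X : Type*} [MetricSpace X] [CompactSpace X] [MeasurableSpace X] [BorelSpace X]
    (φ : ℝ → X → X)
    (hcont : Continuous fun p : ℝ × X => φ p.1 p.2)
    (hzero : ∀ x, φ 0 x = x)
    (hadd : ∀ s t x, φ t (φ s x) = φ (t + s) x)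
    (μ : Measure X)
    (hexp : ∃ δ > 0, ∀ x : X, μ (Gamma φ δ x) = 0) :
    ∀ T : ℝ, 0 ≤ T →
      μ {x : X | ∃ p : ℝ, 0 ≤ p ∧ p ≤ T ∧ IsMinPeriod φ x p} = 0 := by
  obtain ⟨δ, hδ, hnull⟩ := hexp
  intro T hT
  set P : Set X := {x | ∃ p : ℝ, 0 ≤ p ∧ p ≤ T ∧ IsMinPeriod φ x p} with hP
  have hloc : ∀ x : P, ∃ ε > 0, ∀ y ∈ P, dist (x : X) y < ε → y ∈ Gamma φ δ (x : X) := by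
    rintro ⟨x, p, hp0, hpT, hmp⟩
    obtain ⟨ε, hε, h⟩ := local_gamma φ hcont hzero hadd hδ hT hpT hmp
    exact ⟨ε, hε, fun y ⟨q, hq0, hqT, hmq⟩ hd => h y q hq0 hqT hmq hd⟩
  choose ε hε hG using hloc
  obtain ⟨t, htc, hteq⟩ := TopologicalSpace.isOpen_iUnion_countable
    (fun i : P => Metric.ball (i : X) (ε i)) (fun i => Metric.isOpen_ball)
  have hsub : P ⊆ ⋃ i ∈ t, Gamma φ δ (i : X) := by
    intro z hz
    have hz' : z ∈ ⋃ i : P, Metric.ball (i : X) (ε i) :=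
      Set.mem_iUnion.mpr ⟨⟨z, hz⟩, Metric.mem_ball_self (hε _)⟩
    rw [← hteq] at hz'
    obtain ⟨i, hi, hzi⟩ := Set.mem_iUnion₂.mp hz'
    exact Set.mem_iUnion₂.mpr
      ⟨i, hi, hG i z hz (by rwa [Metric.mem_ball, dist_comm] at hzi)⟩
  refine measure_mono_null hsub ?_
  rw [measure_biUnion_null_iff htc]
  exact fun i _ => hnull _
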